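/- Under the time-change formula hypothesis, for every integer h ≠ 0 and every real x < 0, P(Θ_h ≤ x) = E[|Θ_{−h}|^α · 1{Θ_0/|Θ_{−h}| ≤ x, Θ_{−h} ≠ 0}]. -/

import Mathlib

open MeasureTheory

/-- Time-change formula for the spectral tail process, as a hypothesis. -/
def TimeChangeFormula {Ω : Type*} [MeasureSpace Ω] (μ : Measure Ω)
    (Θ : ℤ → Ω → ℝ) (α : ℝ) : Prop :=
  ∀ (s t i : ℤ), s ≤ 0 → 0 ≤ t →
    ∀ f : (ℤ → ℝ) → ℝ, Measurable f → (∃ C : ℝ, ∀ y, |f y| ≤ C) →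
      (∀ y y' : (ℤ → ℝ), (∀ j ∈ Set.Icc s t, y j = y' j) → f y = f y') →
      (∀ y : ℤ → ℝ, y 0 = 0 → f y = 0) →
      ∫ ω, f (fun j => Θ (j - i) ω) ∂μ
        = ∫ ω, f (fun j => Θ j ω / |Θ i ω|) * |Θ i ω| ^ α *
            (if Θ i ω ≠ 0 then 1 else 0) ∂μ

theorem backward_representation_neg
    {Ω : Type*} [MeasureSpace Ω] (μ : Measure Ω) [IsProbabilityMeasure μ]
    (Θ : ℤ → Ω → ℝ) (hmeas : ∀ t, Measurable (Θ t))
    (α : ℝ) (hα : 0 < α)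
    (hΘ0 : ∀ᵐ ω ∂μ, |Θ 0 ω| = 1)
    (hTC : TimeChangeFormula μ Θ α) :
    ∀ h : ℤ, h ≠ 0 → ∀ x : ℝ, x < 0 →
      (μ {ω | Θ h ω ≤ x}).toReal
        = ∫ ω, |Θ (-h) ω| ^ α *
            (if Θ 0 ω / |Θ (-h) ω| ≤ x ∧ Θ (-h) ω ≠ 0 then 1 else 0) ∂μ := by
  intro h hh x hx
  set f : (ℤ → ℝ) → ℝ := fun y => if y 0 ≤ x then 1 else 0 with hf
  have hmf : Measurable f := by
    apply Measurable.ite _ measurable_const measurable_const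
    exact measurableSet_le (measurable_pi_apply 0) measurable_const
  have hbd : ∃ C : ℝ, ∀ y, |f y| ≤ C := by
    refine ⟨1, fun y => ?_⟩
    simp only [hf]
    split <;> norm_num
  have hloc : ∀ y y' : (ℤ → ℝ), (∀ j ∈ Set.Icc (0:ℤ) 0, y j = y' j) → f y = f y' := by
    intro y y' hyy
    have := hyy 0 (by simp)
    simp [hf, this]
  have hvan : ∀ y : ℤ → ℝ, y 0 = 0 → f y = 0 := by
    intro y hy
    simp [hf, hy, not_le.mpr hx]
  have key := hTC 0 0 (-h) le_rfl le_rfl f hmf hbd hloc hvan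
  have hL : ∫ ω, f (fun j => Θ (j - (-h)) ω) ∂μ = (μ {ω | Θ h ω ≤ x}).toReal := by
    have : (fun ω => f (fun j => Θ (j - (-h)) ω))
        = Set.indicator {ω | Θ h ω ≤ x} (fun _ => (1:ℝ)) := by
      funext ω
      simp [hf, Set.indicator_apply, Set.mem_setOf_eq]
    rw [this, integral_indicator_const]
    · simp; rfl
    · exact measurableSet_le (hmeas h) measurable_const
  rw [hL] at key
  rw [key]
  congr 1
  funext ω
  simp only [hf]
  by_cases h1 : Θ 0 ω / |Θ (-h) ω| ≤ x <;> by_cases h2 : Θ (-h) ω ≠ 0 <;>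
    simp [h1, h2] <;> ring
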